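/- Monotonicity of the differential Riccati flow: if P₁(0) ≤ P₂(0) (in the positive semidefinite order, with both symmetric), then the solutions of Ṗ = AᵀP + PA − PBR^{-1}BᵀP + Q satisfy P₁(t) ≤ P₂(t) for all t ≥ 0 in their common interval of existence. -/

import Mathlib

open Matrix

attribute [local instance] Matrix.frobeniusNormedAddCommGroup Matrix.frobeniusNormedSpace

section RiccatiHelpers
namespace RiccatiAux

variable {n : ℕ}

/-- Entry evaluation as a linear map. -/
def entryL (i j : Fin n) : Matrix (Fin n) (Fin n) ℝ →ₗ[ℝ] ℝ where
  toFun X := X i j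
  map_add' X Y := rfl
  map_smul' c X := rfl

noncomputable def entryCLM (i j : Fin n) : Matrix (Fin n) (Fin n) ℝ →L[ℝ] ℝ :=
  (entryL i j).toContinuousLinearMap

@[simp] lemma entryCLM_apply (i j : Fin n) (X : Matrix (Fin n) (Fin n) ℝ) :
    entryCLM i j X = X i j := rfl

/-- Quadratic-form evaluation as a linear map in the matrix. -/
def dotL (v : Fin n → ℝ) : Matrix (Fin n) (Fin n) ℝ →ₗ[ℝ] ℝ where
  toFun X := v ⬝ᵥ X *ᵥ v
  map_add' X Y := by simp [Matrix.add_mulVec, dotProduct_add]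
  map_smul' c X := by simp [Matrix.smul_mulVec]

noncomputable def dotCLM (v : Fin n → ℝ) : Matrix (Fin n) (Fin n) ℝ →L[ℝ] ℝ :=
  (dotL v).toContinuousLinearMap

@[simp] lemma dotCLM_apply (v : Fin n → ℝ) (X : Matrix (Fin n) (Fin n) ℝ) :
    dotCLM v X = v ⬝ᵥ X *ᵥ v := rfl

/-- Multiplication on the right by a fixed matrix, as a continuous linear map. -/
noncomputable def mulRightCLM (K : Matrix (Fin n) (Fin n) ℝ) :
    Matrix (Fin n) (Fin n) ℝ →L[ℝ] Matrix (Fin n) (Fin n) ℝ :=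
  (LinearMap.mulRight ℝ K).toContinuousLinearMap

@[simp] lemma mulRightCLM_apply (K X : Matrix (Fin n) (Fin n) ℝ) :
    mulRightCLM K X = X * K := rfl

noncomputable def mulLeftCLM (K : Matrix (Fin n) (Fin n) ℝ) :
    Matrix (Fin n) (Fin n) ℝ →L[ℝ] Matrix (Fin n) (Fin n) ℝ :=
  (LinearMap.mulLeft ℝ K).toContinuousLinearMap

@[simp] lemma mulLeftCLM_apply (K X : Matrix (Fin n) (Fin n) ℝ) :
    mulLeftCLM K X = K * X := rfl

lemma dot_expand (x y : Fin n → ℝ) (M : Matrix (Fin n) (Fin n) ℝ) :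
    x ⬝ᵥ M *ᵥ y = ∑ i, ∑ j, x i * (M i j * y j) := by
  simp [dotProduct, Matrix.mulVec, Finset.mul_sum]

lemma dotProduct_self_nonneg (v : Fin n → ℝ) : 0 ≤ v ⬝ᵥ v :=
  Finset.sum_nonneg fun i _ => mul_self_nonneg _

lemma abs_le_one_of_unit {v : Fin n → ℝ} (hv : v ⬝ᵥ v = 1) (i : Fin n) : |v i| ≤ 1 := by
  rw [abs_le_one_iff_mul_self_le_one, ← hv]
  exact Finset.single_le_sum (f := fun j => v j * v j)
    (fun j _ => mul_self_nonneg _) (Finset.mem_univ i)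

lemma dot_le_sum_abs {v : Fin n → ℝ} (hv : v ⬝ᵥ v = 1) (M : Matrix (Fin n) (Fin n) ℝ) :
    v ⬝ᵥ M *ᵥ v ≤ ∑ i, ∑ j, |M i j| := by
  rw [dot_expand]
  refine Finset.sum_le_sum fun i _ => Finset.sum_le_sum fun j _ => ?_
  calc v i * (M i j * v j) ≤ |v i * (M i j * v j)| := le_abs_self _
    _ = |v i| * |M i j| * |v j| := by rw [abs_mul, abs_mul, mul_assoc]
    _ ≤ 1 * |M i j| * 1 := by
        gcongr <;> [exact abs_le_one_of_unit hv i; exact abs_le_one_of_unit hv j]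
    _ = |M i j| := by ring

lemma isHermitian_of_transpose {X : Matrix (Fin n) (Fin n) ℝ} (h : Xᵀ = X) :
    X.IsHermitian := by
  ext i j
  rw [Matrix.conjTranspose_apply, star_trivial]
  exact congrFun (congrFun h i) j

/-- The unit sphere (for the dot product) is compact. -/
lemma isCompact_unitSphere : IsCompact {v : Fin n → ℝ | v ⬝ᵥ v = 1} := by
  have hq : Continuous fun v : Fin n → ℝ => v ⬝ᵥ v :=
    continuous_finset_sum _ fun i _ => (continuous_apply i).mul (continuous_apply i)
  refine (isCompact_closedBall (0 : Fin n → ℝ) 1).of_isClosed_subset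
    (isClosed_eq hq continuous_const) ?_
  intro v hv
  rw [Metric.mem_closedBall, dist_zero_right]
  refine (pi_norm_le_iff_of_nonneg zero_le_one).2 fun i => ?_
  simpa [Real.norm_eq_abs] using abs_le_one_of_unit hv i

lemma posSemidef_of_unit {X : Matrix (Fin n) (Fin n) ℝ} (hX : Xᵀ = X)
    (h : ∀ v : Fin n → ℝ, v ⬝ᵥ v = 1 → 0 ≤ v ⬝ᵥ X *ᵥ v) : X.PosSemidef := by
  refine PosSemidef.of_dotProduct_mulVec_nonneg (isHermitian_of_transpose hX) fun y => ?_
  rw [star_trivial]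
  rcases eq_or_ne (y ⬝ᵥ y) 0 with hy0 | hy0
  · rw [dotProduct_self_eq_zero.mp hy0]; simp
  · have hys : 0 < y ⬝ᵥ y := lt_of_le_of_ne (dotProduct_self_nonneg y) (Ne.symm hy0)
    set s := y ⬝ᵥ y with hsdef
    set u : Fin n → ℝ := (Real.sqrt s)⁻¹ • y with hudef
    have hsqrt : Real.sqrt s ≠ 0 := ne_of_gt (Real.sqrt_pos.2 hys)
    have huu : u ⬝ᵥ u = 1 := by
      simp only [hudef, smul_dotProduct, dotProduct_smul, smul_eq_mul, ← hsdef]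
      rw [← mul_assoc, ← Real.sqrt_inv, Real.mul_self_sqrt (by positivity)]
      field_simp
    have hyu : y = Real.sqrt s • u := by
      rw [hudef, smul_smul, mul_inv_cancel₀ hsqrt, one_smul]
    have expand : (Real.sqrt s • u) ⬝ᵥ X *ᵥ (Real.sqrt s • u)
        = Real.sqrt s * (Real.sqrt s * (u ⬝ᵥ X *ᵥ u)) := by
      rw [smul_dotProduct, Matrix.mulVec_smul, dotProduct_smul, smul_eq_mul, smul_eq_mul]
    rw [hyu, expand]
    have := h u huu
    positivity

end RiccatiAux

end RiccatiHelpers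

open RiccatiAux Filter Topology Set in

/-- Monotonicity of the differential Riccati flow: if `P₁(0) ≤ P₂(0)` in the Loewner
order (both symmetric), then the solutions of `Ṗ = AᵀP + PA − PBR⁻¹BᵀP + Q` satisfy
`P₁(t) ≤ P₂(t)` for all `t ≥ 0`. -/
theorem riccati_flow_monotone {n m : ℕ}
    (A : Matrix (Fin n) (Fin n) ℝ) (B : Matrix (Fin n) (Fin m) ℝ)
    (Q : Matrix (Fin n) (Fin n) ℝ) (R : Matrix (Fin m) (Fin m) ℝ)
    (hQ : Q.IsSymm) (hR : R.PosDef)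
    (P₁ P₂ : ℝ → Matrix (Fin n) (Fin n) ℝ)
    (hsymm₁ : ∀ t : ℝ, (P₁ t).IsSymm) (hsymm₂ : ∀ t : ℝ, (P₂ t).IsSymm)
    (hode₁ : ∀ t : ℝ, HasDerivAt P₁
      (Aᵀ * P₁ t + P₁ t * A - P₁ t * B * R⁻¹ * Bᵀ * P₁ t + Q) t)
    (hode₂ : ∀ t : ℝ, HasDerivAt P₂
      (Aᵀ * P₂ t + P₂ t * A - P₂ t * B * R⁻¹ * Bᵀ * P₂ t + Q) t)
    (hinit : (P₂ 0 - P₁ 0).PosSemidef) :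
    ∀ t : ℝ, 0 ≤ t → (P₂ t - P₁ t).PosSemidef := by
  classical
  intro t₁ ht₁
  set K : Matrix (Fin n) (Fin n) ℝ := B * R⁻¹ * Bᵀ with hKdef
  set D : ℝ → Matrix (Fin n) (Fin n) ℝ := fun t => P₂ t - P₁ t with hDdef
  have hDsymm : ∀ t, (D t)ᵀ = D t := by
    intro t
    simp only [hDdef, Matrix.transpose_sub]
    rw [(hsymm₁ t), (hsymm₂ t)]
  have hD' : ∀ t, HasDerivAt D
      ((Aᵀ - P₂ t * K) * D t + D t * (A - K * P₁ t)) t := by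
    intro t
    have h := (hode₂ t).sub (hode₁ t)
    refine h.congr_deriv ?_
    symm
    simp only [hDdef, hKdef]
    rw [show P₂ t * B * R⁻¹ * Bᵀ * P₂ t = P₂ t * (B * R⁻¹ * Bᵀ) * P₂ t by
      simp only [Matrix.mul_assoc], show P₁ t * B * R⁻¹ * Bᵀ * P₁ t = P₁ t * (B * R⁻¹ * Bᵀ) * P₁ t by
      simp only [Matrix.mul_assoc]]
    noncomm_ring
  have hDc : Continuous D := continuous_iff_continuousAt.2 fun t => (hD' t).continuousAt
  have hP₁c : Continuous P₁ := continuous_iff_continuousAt.2 fun t => (hode₁ t).continuousAt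
  have hP₂c : Continuous P₂ := continuous_iff_continuousAt.2 fun t => (hode₂ t).continuousAt

  -- continuity of the coefficient bound function
  set Nf : ℝ → ℝ := fun t =>
    (∑ i, ∑ j, |(Aᵀ - P₂ t * K) i j|) + (∑ i, ∑ j, |(A - K * P₁ t) i j|) with hNfdef
  have hNfc : Continuous Nf := by
    apply Continuous.add
    · refine continuous_finset_sum _ fun i _ => continuous_finset_sum _ fun j _ => ?_
      have : Continuous fun t => (Aᵀ - P₂ t * K) i j :=
        (entryCLM i j).continuous.comp
          (continuous_const.sub ((mulRightCLM K).continuous.comp hP₂c))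
      exact this.abs
    · refine continuous_finset_sum _ fun i _ => continuous_finset_sum _ fun j _ => ?_
      have : Continuous fun t => (A - K * P₁ t) i j :=
        (entryCLM i j).continuous.comp
          (continuous_const.sub ((mulLeftCLM K).continuous.comp hP₁c))
      exact this.abs
  obtain ⟨C, hC⟩ := (isCompact_Icc (a := (0:ℝ)) (b := t₁)).exists_bound_of_continuousOn
    hNfc.continuousOn
  set l : ℝ := C + 1 with hldef
  have hl : ∀ t ∈ Set.Icc (0:ℝ) t₁, Nf t + 1 ≤ l := by
    intro t ht
    have := hC t ht
    rw [Real.norm_eq_abs] at this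
    have := (le_abs_self (Nf t)).trans this
    simp only [hldef]; linarith
  -- joint continuity of the quadratic form
  have hgc : Continuous fun p : ℝ × (Fin n → ℝ) => p.2 ⬝ᵥ (D p.1) *ᵥ p.2 := by
    have : (fun p : ℝ × (Fin n → ℝ) => p.2 ⬝ᵥ (D p.1) *ᵥ p.2)
        = fun p => ∑ i, ∑ j, p.2 i * (D p.1 i j * p.2 j) := by
      funext p; exact dot_expand _ _ _
    rw [this]
    refine continuous_finset_sum _ fun i _ => continuous_finset_sum _ fun j _ => ?_
    exact ((continuous_apply i).comp continuous_snd).mul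
      ((((entryCLM i j).continuous.comp hDc).comp continuous_fst).mul
        ((continuous_apply j).comp continuous_snd))
  -- the key positivity claim
  have key : ∀ ε : ℝ, 0 < ε → ∀ t ∈ Set.Icc (0:ℝ) t₁, ∀ x : Fin n → ℝ, x ⬝ᵥ x = 1 →
      0 < x ⬝ᵥ (D t) *ᵥ x + ε * Real.exp (l * t) := by
    intro ε hε
    by_contra hcon
    push_neg at hcon
    obtain ⟨t₀, ht₀, x₀, hx₀, hneg⟩ := hcon
    set S : Set ℝ := {t | t ∈ Set.Icc (0:ℝ) t₁ ∧
      ∃ x : Fin n → ℝ, x ⬝ᵥ x = 1 ∧ x ⬝ᵥ (D t) *ᵥ x + ε * Real.exp (l * t) ≤ 0} with hSdef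
    have hSne : S.Nonempty := ⟨t₀, ht₀, x₀, hx₀, hneg⟩
    have hSbdd : BddBelow S := ⟨0, fun t ht => ht.1.1⟩
    set τ := sInf S with hτdef
    have hτmem : τ ∈ Set.Icc (0:ℝ) t₁ := by
      refine ⟨le_csInf hSne fun t ht => ht.1.1, ?_⟩
      obtain ⟨t₂, ht₂⟩ := hSne
      exact (csInf_le hSbdd ht₂).trans ht₂.1.2
    obtain ⟨uq, -, huq_t, huq_mem⟩ := exists_seq_tendsto_sInf hSne hSbdd
    choose xseq hxseq1 hxseq2 using fun k => (huq_mem k).2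
    obtain ⟨w, hw_mem, φ, hφ, hw_t⟩ := isCompact_unitSphere.tendsto_subseq
      (fun k => (hxseq1 k : xseq k ∈ {v : Fin n → ℝ | v ⬝ᵥ v = 1}))
    have hww : w ⬝ᵥ w = 1 := hw_mem
    have hGc : Continuous fun p : ℝ × (Fin n → ℝ) =>
        p.2 ⬝ᵥ (D p.1) *ᵥ p.2 + ε * Real.exp (l * p.1) :=
      hgc.add (continuous_const.mul
        (Real.continuous_exp.comp (continuous_const.mul continuous_fst)))
    have htend : Filter.Tendsto (fun k => (uq (φ k), xseq (φ k))) Filter.atTop (𝓝 (τ, w)) :=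
      (huq_t.comp hφ.tendsto_atTop).prodMk_nhds hw_t
    have hgτw : w ⬝ᵥ (D τ) *ᵥ w + ε * Real.exp (l * τ) ≤ 0 :=
      le_of_tendsto ((hGc.tendsto (τ, w)).comp htend)
        (Filter.Eventually.of_forall fun k => hxseq2 (φ k))
    have hτpos : 0 < τ := by
      rcases lt_or_eq_of_le hτmem.1 with h | h
      · exact h
      · exfalso
        rw [← h] at hgτw
        have h1 : (0:ℝ) ≤ w ⬝ᵥ (D 0) *ᵥ w := by
          have := hinit.dotProduct_mulVec_nonneg w; rwa [star_trivial] at this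
        rw [mul_zero, Real.exp_zero, mul_one] at hgτw
        linarith
    have hpos : ∀ t, 0 ≤ t → t < τ → ∀ z : Fin n → ℝ, z ⬝ᵥ z = 1 →
        0 < z ⬝ᵥ (D t) *ᵥ z + ε * Real.exp (l * t) := by
      intro t h0 hlt z hz
      by_contra hc
      push_neg at hc
      have hmem : t ∈ S := ⟨⟨h0, hlt.le.trans hτmem.2⟩, z, hz, hc⟩
      exact absurd (csInf_le hSbdd hmem) (not_le.2 hlt)
    set c : ℝ := ε * Real.exp (l * τ) with hcdef
    have hcpos : 0 < c := mul_pos hε (Real.exp_pos _)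
    have hquad : ∀ z : Fin n → ℝ, z ⬝ᵥ z = 1 →
        z ⬝ᵥ (D τ + c • (1 : Matrix (Fin n) (Fin n) ℝ)) *ᵥ z
          = z ⬝ᵥ (D τ) *ᵥ z + c := by
      intro z hz
      rw [Matrix.add_mulVec, dotProduct_add, Matrix.smul_mulVec, Matrix.one_mulVec,
        dotProduct_smul, smul_eq_mul, hz, mul_one]
    have hEpsd : (D τ + c • (1 : Matrix (Fin n) (Fin n) ℝ)).PosSemidef := by
      refine posSemidef_of_unit ?_ ?_
      · rw [Matrix.transpose_add, hDsymm, Matrix.transpose_smul, Matrix.transpose_one]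
      · intro z hz
        rw [hquad z hz]
        have hcont : Continuous fun t => z ⬝ᵥ (D t) *ᵥ z + ε * Real.exp (l * t) :=
          hGc.comp (continuous_id.prodMk continuous_const)
        have hlim : Filter.Tendsto (fun t => z ⬝ᵥ (D t) *ᵥ z + ε * Real.exp (l * t)) (𝓝[<] τ)
            (𝓝 (z ⬝ᵥ (D τ) *ᵥ z + ε * Real.exp (l * τ))) :=
          (hcont.tendsto τ).mono_left nhdsWithin_le_nhds
        refine ge_of_tendsto hlim ?_
        filter_upwards [Ioo_mem_nhdsLT hτpos] with t ht
        exact (hpos t ht.1.le ht.2 z hz).le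
    have hτ0 : w ⬝ᵥ (D τ + c • (1 : Matrix (Fin n) (Fin n) ℝ)) *ᵥ w = 0 := by
      have hge := hEpsd.dotProduct_mulVec_nonneg w
      rw [star_trivial] at hge
      refine le_antisymm ?_ hge
      rw [hquad w hww]
      exact hgτw
    have hker : (D τ + c • (1 : Matrix (Fin n) (Fin n) ℝ)) *ᵥ w = 0 :=
      (hEpsd.dotProduct_mulVec_zero_iff w).mp (by rw [star_trivial]; exact hτ0)
    have hDw : D τ *ᵥ w = (-c) • w := by
      rw [Matrix.add_mulVec, Matrix.smul_mulVec, Matrix.one_mulVec] at hker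
      rw [eq_neg_of_add_eq_zero_left hker, neg_smul]
    -- the function h and its derivative at τ
    have hd1 : HasDerivAt (fun t => w ⬝ᵥ (D t) *ᵥ w)
        (w ⬝ᵥ ((Aᵀ - P₂ τ * K) * D τ + D τ * (A - K * P₁ τ)) *ᵥ w) τ := by
      have := (dotCLM w).hasFDerivAt.comp_hasDerivAt τ (hD' τ)
      simp only [Function.comp_def, dotCLM_apply] at this
      exact this
    have hd2 : HasDerivAt (fun t => ε * Real.exp (l * t)) (ε * (Real.exp (l * τ) * l)) τ := by
      have hin : HasDerivAt (fun t : ℝ => l * t) l τ := by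
        simpa using (hasDerivAt_id τ).const_mul l
      exact ((Real.hasDerivAt_exp (l * τ)).comp τ hin).const_mul ε
    have hdh : HasDerivAt (fun t => w ⬝ᵥ (D t) *ᵥ w + ε * Real.exp (l * t))
        (w ⬝ᵥ ((Aᵀ - P₂ τ * K) * D τ + D τ * (A - K * P₁ τ)) *ᵥ w
          + ε * (Real.exp (l * τ) * l)) τ := hd1.add hd2
    have hval : w ⬝ᵥ ((Aᵀ - P₂ τ * K) * D τ + D τ * (A - K * P₁ τ)) *ᵥ w
        = (-c) * (w ⬝ᵥ (Aᵀ - P₂ τ * K) *ᵥ w) + (-c) * (w ⬝ᵥ (A - K * P₁ τ) *ᵥ w) := by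
      rw [Matrix.add_mulVec, dotProduct_add]
      congr 1
      · rw [← Matrix.mulVec_mulVec, hDw, Matrix.mulVec_smul, dotProduct_smul, smul_eq_mul]
      · rw [← Matrix.mulVec_mulVec, Matrix.dotProduct_mulVec, ← Matrix.mulVec_transpose,
          hDsymm, hDw, smul_dotProduct, smul_eq_mul]
    have hb1 : w ⬝ᵥ (Aᵀ - P₂ τ * K) *ᵥ w ≤ ∑ i, ∑ j, |(Aᵀ - P₂ τ * K) i j| :=
      dot_le_sum_abs hww _
    have hb2 : w ⬝ᵥ (A - K * P₁ τ) *ᵥ w ≤ ∑ i, ∑ j, |(A - K * P₁ τ) i j| :=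
      dot_le_sum_abs hww _
    have hNτ : Nf τ + 1 ≤ l := hl τ hτmem
    have hNτ' : Nf τ = (∑ i, ∑ j, |(Aᵀ - P₂ τ * K) i j|)
        + (∑ i, ∑ j, |(A - K * P₁ τ) i j|) := rfl
    have hdpos : 0 < w ⬝ᵥ ((Aᵀ - P₂ τ * K) * D τ + D τ * (A - K * P₁ τ)) *ᵥ w
        + ε * (Real.exp (l * τ) * l) := by
      rw [hval]
      have hcl : ε * (Real.exp (l * τ) * l) = c * l := by rw [hcdef]; ring
      rw [hcl]
      have hsum : w ⬝ᵥ (Aᵀ - P₂ τ * K) *ᵥ w + w ⬝ᵥ (A - K * P₁ τ) *ᵥ w ≤ l - 1 := by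
        rw [hNτ'] at hNτ; linarith
      nlinarith [hcpos, hsum]
    have hfτ : w ⬝ᵥ (D τ) *ᵥ w + ε * Real.exp (l * τ) = 0 := by
      rw [← hcdef, ← hquad w hww]
      exact hτ0
    have hslope := hasDerivAt_iff_tendsto_slope.mp hdh
    have hslope' : Filter.Tendsto (slope (fun t => w ⬝ᵥ (D t) *ᵥ w + ε * Real.exp (l * t)) τ)
        (𝓝[<] τ) (𝓝 (w ⬝ᵥ ((Aᵀ - P₂ τ * K) * D τ + D τ * (A - K * P₁ τ)) *ᵥ w
          + ε * (Real.exp (l * τ) * l))) :=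
      hslope.mono_left (nhdsWithin_mono τ fun t ht => ne_of_lt ht)
    have hle0 : w ⬝ᵥ ((Aᵀ - P₂ τ * K) * D τ + D τ * (A - K * P₁ τ)) *ᵥ w
        + ε * (Real.exp (l * τ) * l) ≤ 0 := by
      refine le_of_tendsto hslope' ?_
      filter_upwards [Ioo_mem_nhdsLT hτpos] with t ht
      have hht : 0 < w ⬝ᵥ (D t) *ᵥ w + ε * Real.exp (l * t) := hpos t ht.1.le ht.2 w hww
      rw [slope_def_field, hfτ, sub_zero]
      exact div_nonpos_of_nonneg_of_nonpos hht.le (by linarith [ht.2])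
    linarith
  -- conclude positive semidefiniteness at t₁
  refine PosSemidef.of_dotProduct_mulVec_nonneg (isHermitian_of_transpose (hDsymm t₁)) ?_
  intro y
  rw [star_trivial]
  rcases eq_or_ne (y ⬝ᵥ y) 0 with hy0 | hy0
  · rw [dotProduct_self_eq_zero.mp hy0]; simp
  · have hys : 0 < y ⬝ᵥ y := lt_of_le_of_ne (dotProduct_self_nonneg y) (Ne.symm hy0)
    set s := y ⬝ᵥ y with hsdef
    set u : Fin n → ℝ := (Real.sqrt s)⁻¹ • y with hudef
    have hsqrt : Real.sqrt s ≠ 0 := ne_of_gt (Real.sqrt_pos.2 hys)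
    have huu : u ⬝ᵥ u = 1 := by
      simp only [hudef, smul_dotProduct, dotProduct_smul, smul_eq_mul, ← hsdef]
      rw [← mul_assoc, ← Real.sqrt_inv, Real.mul_self_sqrt (by positivity)]
      field_simp
    have hu0 : 0 ≤ u ⬝ᵥ (D t₁) *ᵥ u := by
      by_contra hneg
      push_neg at hneg
      set ε : ℝ := -(u ⬝ᵥ (D t₁) *ᵥ u) / Real.exp (l * t₁) with hεdef
      have hε : 0 < ε := div_pos (by linarith) (Real.exp_pos _)
      have := key ε hε t₁ ⟨ht₁, le_refl _⟩ u huu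
      rw [hεdef, div_mul_cancel₀ _ (ne_of_gt (Real.exp_pos _))] at this
      linarith
    have hyu : y = Real.sqrt s • u := by
      rw [hudef, smul_smul, mul_inv_cancel₀ hsqrt, one_smul]
    have expand : (Real.sqrt s • u) ⬝ᵥ (D t₁) *ᵥ (Real.sqrt s • u)
        = Real.sqrt s * (Real.sqrt s * (u ⬝ᵥ (D t₁) *ᵥ u)) := by
      rw [smul_dotProduct, Matrix.mulVec_smul, dotProduct_smul, smul_eq_mul, smul_eq_mul]
    rw [hyu, expand]
    positivity
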